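/- For every 3-coloring of the edges of the complete graph K_n on n vertices, there exists a monochromatic connected component containing at least n/2 vertices. -/

import Mathlib

open Finset

/-- Two vertices are connected by the edge set `E` (of a hypergraph)
if they are joined by a walk of edges from `E`. -/
def connBy {V : Type*} (E : Set (Finset V)) : V → V → Prop :=
  Relation.ReflTransGen (fun u w => ∃ e ∈ E, u ∈ e ∧ w ∈ e)

/-- The connected component of `v` in the hypergraph with edge set `E`. -/
def compOf {V : Type*} (E : Set (Finset V)) (v : V) : Set V :=
  {u | connBy E u v}

namespace StmtAux

variable {V : Type*}

lemma connBy_refl (E : Set (Finset V)) (v : V) : connBy E v v := Relation.ReflTransGen.refl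

lemma connBy_trans {E : Set (Finset V)} {u v w : V} :
    connBy E u v → connBy E v w → connBy E u w :=
  Relation.ReflTransGen.trans

lemma connBy_single {E : Set (Finset V)} {e : Finset V} (he : e ∈ E) {u w : V}
    (hu : u ∈ e) (hw : w ∈ e) : connBy E u w :=
  Relation.ReflTransGen.single ⟨e, he, hu, hw⟩

lemma connBy_mono {E E' : Set (Finset V)} (h : E ⊆ E') {u w : V} :
    connBy E u w → connBy E' u w :=
  Relation.ReflTransGen.mono (p := fun u w => ∃ e ∈ E', u ∈ e ∧ w ∈ e)
    (fun a b ⟨e, he, ha, hb⟩ => ⟨e, h he, ha, hb⟩) u w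

/-- Edge set of color `c`. -/
def Ec (n : ℕ) (χ : Finset (Fin n) → Fin 3) (c : Fin 3) : Set (Finset (Fin n)) :=
  {e | e.card = 2 ∧ χ e = c}

lemma edge_mem {n : ℕ} {χ : Finset (Fin n) → Fin 3} {c : Fin 3} {u w : Fin n}
    (hne : u ≠ w) (hc : χ {u, w} = c) : ({u, w} : Finset (Fin n)) ∈ Ec n χ c :=
  ⟨Finset.card_pair hne, hc⟩

lemma conn_of_edge {n : ℕ} {χ : Finset (Fin n) → Fin 3} {c : Fin 3} {u w : Fin n}
    (hne : u ≠ w) (hc : χ {u, w} = c) : connBy (Ec n χ c) u w :=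
  connBy_single (edge_mem hne hc) (by simp) (by simp)

lemma conn_of_edge' {n : ℕ} {χ : Finset (Fin n) → Fin 3} {c : Fin 3} {u w : Fin n}
    (hne : u ≠ w) (hc : χ {u, w} = c) : connBy (Ec n χ c) w u :=
  connBy_single (edge_mem hne hc) (by simp) (by simp)

lemma ncard_comp_ge {n : ℕ} {E : Set (Finset (Fin n))} {v : Fin n} {S : Set (Fin n)}
    (h : ∀ u ∈ S, connBy E u v) : S.ncard ≤ (compOf E v).ncard :=
  Set.ncard_le_ncard h (Set.toFinite _)

lemma fin3_cases (c : Fin 3) : c = 0 ∨ c = 1 ∨ c = 2 := by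
  fin_cases c <;> simp

lemma rat_half {k m : ℕ} (h : k ≤ 2 * m) : (k : ℚ) / 2 ≤ m := by
  have : (k : ℚ) ≤ 2 * m := by exact_mod_cast h
  linarith

end StmtAux

open StmtAux

theorem stmt0 (n : ℕ) (hn : 1 ≤ n) (χ : Finset (Fin n) → Fin 3) :
    ∃ (c : Fin 3) (v : Fin n),
      (n : ℚ) / 2 ≤ (compOf {e | e.card = 2 ∧ χ e = c} v).ncard := by
  classical
  suffices h : ∃ (c : Fin 3) (v : Fin n), n ≤ 2 * (compOf (Ec n χ c) v).ncard by
    obtain ⟨c, v, h⟩ := h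
    exact ⟨c, v, rat_half h⟩
  have v0 : Fin n := ⟨0, hn⟩
  set X : Set (Fin n) := compOf (Ec n χ 2) v0 with hXdef
  have hv0X : v0 ∈ X := connBy_refl _ _
  -- cross edges are not color 2
  have cross : ∀ x ∈ X, ∀ y, y ∉ X → χ {x, y} ≠ 2 := by
    intro x hx y hy hc
    have hne : x ≠ y := by rintro rfl; exact hy hx
    exact hy (connBy_trans (conn_of_edge' hne hc) hx)
  by_cases hXu : X = Set.univ
  · refine ⟨2, v0, ?_⟩
    have : (compOf (Ec n χ 2) v0).ncard = n := by
      rw [← hXdef, hXu, Set.ncard_univ, Nat.card_eq_fintype_card, Fintype.card_fin]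
    omega
  · -- pick y0 outside X
    have : ∃ y0, y0 ∉ X := by
      by_contra h
      push_neg at h
      exact hXu (Set.eq_univ_iff_forall.2 h)
    obtain ⟨y0, hy0⟩ := this
    by_cases hcr : ∃ x ∈ X, ∃ y, y ∉ X ∧ χ {x, y} = 0
    · -- there is a cross edge of color 0
      obtain ⟨x1, hx1X, y1, hy1X, hcol1⟩ := hcr
      have hx1y1 : x1 ≠ y1 := by rintro rfl; exact hy1X hx1X
      -- cross color-0 edges
      set Ecr : Set (Finset (Fin n)) :=
        {e | e.card = 2 ∧ χ e = 0 ∧ (∃ x ∈ e, x ∈ X) ∧ ∃ y ∈ e, y ∉ X} with hEcr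
      have hEcrsub : Ecr ⊆ Ec n χ 0 := fun e he => ⟨he.1, he.2.1⟩
      set C : Set (Fin n) := compOf Ecr x1 with hCdef
      have hx1C : x1 ∈ C := connBy_refl _ _
      have hy1C : y1 ∈ C := by
        refine connBy_single (e := {x1, y1}) ?_ (by simp) (by simp)
        exact ⟨Finset.card_pair hx1y1, hcol1, ⟨x1, by simp, hx1X⟩, ⟨y1, by simp, hy1X⟩⟩
      -- cross edges with one endpoint in C and the other not in C have color 1
      have col1a : ∀ a ∈ X, a ∈ C → ∀ y, y ∉ X → y ∉ C → χ {a, y} = 1 := by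
        intro a haX haC y hyX hyC
        have hne : a ≠ y := by rintro rfl; exact hyX haX
        rcases fin3_cases (χ {a, y}) with h0 | h1 | h2
        · exfalso
          apply hyC
          refine connBy_trans (connBy_single (e := {a, y}) ?_ (by simp) (by simp)) haC
          exact ⟨Finset.card_pair hne, h0, ⟨a, by simp, haX⟩, ⟨y, by simp, hyX⟩⟩
        · exact h1
        · exact absurd h2 (cross a haX y hyX)
      have col1b : ∀ x ∈ X, x ∉ C → ∀ b, b ∉ X → b ∈ C → χ {x, b} = 1 := by
        intro x hxX hxC b hbX hbC
        have hne : x ≠ b := by rintro rfl; exact hbX hxX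
        rcases fin3_cases (χ {x, b}) with h0 | h1 | h2
        · exfalso
          apply hxC
          refine connBy_trans (connBy_single (e := {x, b}) ?_ (by simp) (by simp)) hbC
          exact ⟨Finset.card_pair hne, h0, ⟨x, by simp, hxX⟩, ⟨b, by simp, hbX⟩⟩
        · exact h1
        · exact absurd h2 (cross x hxX b hbX)
      -- the two candidate sets
      set S1 : Set (Fin n) := (X ∩ C) ∪ (Xᶜ ∩ Cᶜ) with hS1def
      set S2 : Set (Fin n) := (X ∩ Cᶜ) ∪ (Xᶜ ∩ C) with hS2def
      have hcompl : S2 = S1ᶜ := by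
        ext u
        by_cases h1 : u ∈ X <;> by_cases h2 : u ∈ C <;>
          simp [hS1def, hS2def, h1, h2]
      have hsum : S1.ncard + S2.ncard = n := by
        rw [hcompl, Set.ncard_add_ncard_compl, Nat.card_eq_fintype_card, Fintype.card_fin]
      rcases le_total S1.ncard S2.ncard with hle | hle
      · -- S2 is large
        have hbig : n ≤ 2 * S2.ncard := by omega
        by_cases hd : ∃ x ∈ X, x ∉ C
        · obtain ⟨x2, hx2X, hx2C⟩ := hd
          -- S2 is color-1 connected to y1
          refine ⟨1, y1, ?_⟩
          have hconn : ∀ u ∈ S2, connBy (Ec n χ 1) u y1 := by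
            rintro u (⟨huX, huC⟩ | ⟨huX, huC⟩)
            · -- u ∈ X, u ∉ C : direct edge to y1
              have hne : u ≠ y1 := by rintro rfl; exact hy1X huX
              exact conn_of_edge hne (col1b u huX huC y1 hy1X hy1C)
            · -- u ∉ X, u ∈ C : path u — x2 — y1
              have hne1 : x2 ≠ u := by rintro rfl; exact huX hx2X
              have hne2 : x2 ≠ y1 := by rintro rfl; exact hy1X hx2X
              exact connBy_trans (conn_of_edge' hne1 (col1b x2 hx2X hx2C u huX huC))
                (conn_of_edge hne2 (col1b x2 hx2X hx2C y1 hy1X hy1C))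
          exact le_trans hbig (by have := ncard_comp_ge hconn; omega)
        · -- X ⊆ C, so S2 ⊆ C, use color-0 component of x1
          push_neg at hd
          refine ⟨0, x1, ?_⟩
          have hconn : ∀ u ∈ S2, connBy (Ec n χ 0) u x1 := by
            rintro u (⟨huX, huC⟩ | ⟨huX, huC⟩)
            · exact absurd (hd u huX) huC
            · exact connBy_mono hEcrsub huC
          exact le_trans hbig (by have := ncard_comp_ge hconn; omega)
      · -- S1 is large
        have hbig : n ≤ 2 * S1.ncard := by omega
        by_cases hd : ∃ y, y ∉ X ∧ y ∉ C
        · obtain ⟨y2, hy2X, hy2C⟩ := hd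
          -- S1 is color-1 connected to x1
          refine ⟨1, x1, ?_⟩
          have hconn : ∀ u ∈ S1, connBy (Ec n χ 1) u x1 := by
            rintro u (⟨huX, huC⟩ | ⟨huX, huC⟩)
            · -- u ∈ X ∩ C : path u — y2 — x1
              have hne1 : u ≠ y2 := by rintro rfl; exact hy2X huX
              have hne2 : x1 ≠ y2 := by rintro rfl; exact hy2X hx1X
              exact connBy_trans (conn_of_edge hne1 (col1a u huX huC y2 hy2X hy2C))
                (conn_of_edge' hne2 (col1a x1 hx1X hx1C y2 hy2X hy2C))
            · -- u ∉ X, u ∉ C : direct edge to x1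
              have hne : x1 ≠ u := by rintro rfl; exact huX hx1X
              exact conn_of_edge' hne (col1a x1 hx1X hx1C u huX huC)
          exact le_trans hbig (by have := ncard_comp_ge hconn; omega)
        · -- Xᶜ ⊆ C, so S1 ⊆ C, use color-0 component of x1
          push_neg at hd
          refine ⟨0, x1, ?_⟩
          have hconn : ∀ u ∈ S1, connBy (Ec n χ 0) u x1 := by
            rintro u (⟨huX, huC⟩ | ⟨huX, huC⟩)
            · exact connBy_mono hEcrsub huC
            · exact absurd (hd u huX) huC
          exact le_trans hbig (by have := ncard_comp_ge hconn; omega)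
    · -- no cross edge has color 0: everything is color-1 connected to y0
      push_neg at hcr
      have crossc1 : ∀ x ∈ X, ∀ y, y ∉ X → χ {x, y} = 1 := by
        intro x hx y hy
        rcases fin3_cases (χ {x, y}) with h0 | h1 | h2
        · exact absurd h0 (hcr x hx y hy)
        · exact h1
        · exact absurd h2 (cross x hx y hy)
      refine ⟨1, y0, ?_⟩
      have hconn : ∀ u ∈ (Set.univ : Set (Fin n)), connBy (Ec n χ 1) u y0 := by
        intro u _
        by_cases huX : u ∈ X
        · have hne : u ≠ y0 := by rintro rfl; exact hy0 huX
          exact conn_of_edge hne (crossc1 u huX y0 hy0)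
        · have hne1 : v0 ≠ u := by rintro rfl; exact huX hv0X
          have hne2 : v0 ≠ y0 := by rintro rfl; exact hy0 hv0X
          exact connBy_trans (conn_of_edge' hne1 (crossc1 v0 hv0X u huX))
            (conn_of_edge hne2 (crossc1 v0 hv0X y0 hy0))
      have := ncard_comp_ge hconn
      rw [Set.ncard_univ, Nat.card_eq_fintype_card, Fintype.card_fin] at this
      omega
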